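/- (Key algebraic computation in the proof of Theorem 2.23) Let S be a 4-dimensional linear subspace of ℝ⁸, let π denote the orthogonal projection of ℝ⁸ onto S^⊥, and let π^T = id − π. Fix U, V ∈ S. Define N(X;Y,Z,T) = (⟨U,Y⟩⟨V,Z⟩ − ⟨U,Z⟩⟨V,Y⟩)⟨P(U,V,πX), T⟩ + (⟨U,Z⟩⟨V,T⟩ − ⟨U,T⟩⟨V,Z⟩)⟨P(U,V,πX), Y⟩ + (⟨U,T⟩⟨V,Y⟩ − ⟨U,Y⟩⟨V,T⟩)⟨P(U,V,πX), Z⟩, and the quadrilinear map D(X,Y,Z,T) = N(X;Y,Z,T) − N(Y;X,Z,T) + N(Z;X,Y,T) − N(T;X,Y,Z). Then for every orthonormal basis {g₁,g₂,g₃,g₄} of S: (1/24) Σ_{m,n,p=1}^8 D( π(P(e_m,e_n,e_p)) − π^T(P(e_m,e_n,e_p)), e_m, e_n, e_p ) = (1/2) Σ_{a=1}^4 ‖π(P(U,V,g_a))‖². -/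

import Mathlib

open scoped RealInnerProductSpace

noncomputable section

abbrev E8 : Type := EuclideanSpace ℝ (Fin 8)

/-- The standard orthonormal basis vectors of ℝ⁸. -/
def e8 (i : Fin 8) : E8 := EuclideanSpace.single i 1

/-- Kronecker delta. -/
def kd8 (i j : Fin 8) : ℝ := if i = j then 1 else 0

/-- `e^{abcd}(e_i, e_j, e_k, e_l)` : component of a wedge of four dual basis covectors. -/
def quad8 (a b c d i j k l : Fin 8) : ℝ :=
  Matrix.det !![kd8 a i, kd8 a j, kd8 a k, kd8 a l;
                kd8 b i, kd8 b j, kd8 b k, kd8 b l;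
                kd8 c i, kd8 c j, kd8 c k, kd8 c l;
                kd8 d i, kd8 d j, kd8 d k, kd8 d l]

/-- Components `Φ_{ijkl}` of the standard Spin(7) 4-form
`Φ = e¹²³⁴ + (e¹² − e³⁴)∧(e⁵⁶ − e⁷⁸) + (e¹³ − e⁴²)∧(e⁵⁷ − e⁸⁶)
   + (e¹⁴ − e²³)∧(e⁵⁸ − e⁶⁷) + e⁵⁶⁷⁸` (indices shifted to be 0-based). -/
def PhiC (i j k l : Fin 8) : ℝ :=
  quad8 0 1 2 3 i j k l
  + quad8 0 1 4 5 i j k l - quad8 0 1 6 7 i j k l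
  - quad8 2 3 4 5 i j k l + quad8 2 3 6 7 i j k l
  + quad8 0 2 4 6 i j k l - quad8 0 2 7 5 i j k l
  - quad8 3 1 4 6 i j k l + quad8 3 1 7 5 i j k l
  + quad8 0 3 4 7 i j k l - quad8 0 3 5 6 i j k l
  - quad8 1 2 4 7 i j k l + quad8 1 2 5 6 i j k l
  + quad8 4 5 6 7 i j k l

/-- The standard Spin(7) 4-form evaluated on arbitrary vectors. -/
def Phi8 (x y z w : E8) : ℝ :=
  ∑ i, ∑ j, ∑ k, ∑ l, x i * y j * z k * w l * PhiC i j k l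

/-- The triple cross product on ℝ⁸, characterized by `⟨P(x,y,z), w⟩ = Φ(x,y,z,w)`. -/
def P8 (x y z : E8) : E8 := (WithLp.equiv 2 (Fin 8 → ℝ)).symm fun l => Phi8 x y z (e8 l)


-- basics
lemma e8_apply (i j : Fin 8) : e8 i j = if j = i then 1 else 0 := by
  simp [e8, EuclideanSpace.single_apply]

lemma inner8 (x y : E8) : ⟪x, y⟫ = ∑ i, x i * y i := by
  simp [PiLp.inner_apply, RCLike.inner_apply]
  exact Finset.sum_congr rfl fun i _ => mul_comm _ _

lemma inner_e8 (x : E8) (i : Fin 8) : ⟪x, e8 i⟫ = x i := by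
  rw [inner8, Finset.sum_eq_single i] <;> simp [e8_apply]
  intro b hb; simp [hb]

lemma P8_apply (x y z : E8) (l : Fin 8) : P8 x y z l = Phi8 x y z (e8 l) := rfl

-- collapse lemmas: expanding a slot of Phi8 over the basis
lemma Phi8_e1 (m : Fin 8) (y z w : E8) :
    Phi8 (e8 m) y z w = ∑ j, ∑ k, ∑ l, y j * z k * w l * PhiC m j k l := by
  unfold Phi8
  rw [Finset.sum_eq_single m]
  · simp [e8_apply]
  · intro i _ him
    simp [e8_apply, him]
  · simp

lemma E1 (x y z w : E8) : ∑ m, x m * Phi8 (e8 m) y z w = Phi8 x y z w := by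
  simp only [Phi8_e1]
  unfold Phi8
  refine Finset.sum_congr rfl fun m _ => ?_
  rw [Finset.mul_sum]
  refine Finset.sum_congr rfl fun j _ => ?_
  rw [Finset.mul_sum]
  refine Finset.sum_congr rfl fun k _ => ?_
  rw [Finset.mul_sum]
  exact Finset.sum_congr rfl fun l _ => by ring

lemma Phi8_e2 (n : Fin 8) (x z w : E8) :
    Phi8 x (e8 n) z w = ∑ i, ∑ k, ∑ l, x i * z k * w l * PhiC i n k l := by
  unfold Phi8
  refine Finset.sum_congr rfl fun i _ => ?_
  rw [Finset.sum_eq_single n]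
  · simp [e8_apply]
  · intro j _ hjn
    simp [e8_apply, hjn]
  · simp

lemma E2 (x y z w : E8) : ∑ n, y n * Phi8 x (e8 n) z w = Phi8 x y z w := by
  simp only [Phi8_e2, Finset.mul_sum]
  unfold Phi8
  rw [Finset.sum_comm]
  refine Finset.sum_congr rfl fun i _ => ?_
  refine Finset.sum_congr rfl fun j _ => ?_
  refine Finset.sum_congr rfl fun k _ => ?_
  exact Finset.sum_congr rfl fun l _ => by ring

lemma Phi8_e3 (k : Fin 8) (x y w : E8) :
    Phi8 x y (e8 k) w = ∑ i, ∑ j, ∑ l, x i * y j * w l * PhiC i j k l := by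
  unfold Phi8
  refine Finset.sum_congr rfl fun i _ => ?_
  refine Finset.sum_congr rfl fun j _ => ?_
  rw [Finset.sum_eq_single k]
  · simp [e8_apply]
  · intro c _ hc
    simp [e8_apply, hc]
  · simp

lemma Phi8_e4 (l : Fin 8) (x y z : E8) :
    Phi8 x y z (e8 l) = ∑ i, ∑ j, ∑ k, x i * y j * z k * PhiC i j k l := by
  unfold Phi8
  refine Finset.sum_congr rfl fun i _ => ?_
  refine Finset.sum_congr rfl fun j _ => ?_
  refine Finset.sum_congr rfl fun k _ => ?_
  rw [Finset.sum_eq_single l]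
  · simp [e8_apply]
  · intro c _ hc
    simp [e8_apply, hc]
  · simp

lemma E3 (x y z w : E8) : ∑ k, z k * Phi8 x y (e8 k) w = Phi8 x y z w := by
  simp only [Phi8_e3, Finset.mul_sum]
  unfold Phi8
  rw [Finset.sum_comm]
  refine Finset.sum_congr rfl fun i _ => ?_
  rw [Finset.sum_comm]
  refine Finset.sum_congr rfl fun j _ => ?_
  refine Finset.sum_congr rfl fun k _ => ?_
  exact Finset.sum_congr rfl fun l _ => by ring

lemma E4 (x y z w : E8) : ∑ l, w l * Phi8 x y z (e8 l) = Phi8 x y z w := by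
  simp only [Phi8_e4, Finset.mul_sum]
  unfold Phi8
  rw [Finset.sum_comm]
  refine Finset.sum_congr rfl fun i _ => ?_
  rw [Finset.sum_comm]
  refine Finset.sum_congr rfl fun j _ => ?_
  rw [Finset.sum_comm]
  refine Finset.sum_congr rfl fun k _ => ?_
  exact Finset.sum_congr rfl fun l _ => by ring

lemma inner_P8 (x y z w : E8) : ⟪P8 x y z, w⟫ = Phi8 x y z w := by
  rw [inner8, ← E4 x y z w]
  exact Finset.sum_congr rfl fun l _ => by rw [P8_apply, mul_comm]

-- generic 4x4 determinant formula
lemma det4 (a b c d e f g h i j k l m n o p : ℝ) :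
    Matrix.det !![a,b,c,d; e,f,g,h; i,j,k,l; m,n,o,p]
    = a*(f*(k*p-l*o) - g*(j*p-l*n) + h*(j*o-k*n))
    - b*(e*(k*p-l*o) - g*(i*p-l*m) + h*(i*o-k*m))
    + c*(e*(j*p-l*n) - f*(i*p-l*m) + h*(i*n-j*m))
    - d*(e*(j*o-k*n) - f*(i*o-k*m) + g*(i*n-j*m)) := by
  simp [Matrix.det_succ_row_zero, Fin.sum_univ_succ, Fin.succAbove]
  ring

lemma quad8_swap12 (a b c d i j k l : Fin 8) :
    quad8 a b c d j i k l = -quad8 a b c d i j k l := by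
  unfold quad8; rw [det4, det4]; ring

lemma quad8_swap23 (a b c d i j k l : Fin 8) :
    quad8 a b c d i k j l = -quad8 a b c d i j k l := by
  unfold quad8; rw [det4, det4]; ring

lemma quad8_swap34 (a b c d i j k l : Fin 8) :
    quad8 a b c d i j l k = -quad8 a b c d i j k l := by
  unfold quad8; rw [det4, det4]; ring

lemma PhiC_swap12 (i j k l : Fin 8) : PhiC j i k l = -PhiC i j k l := by
  unfold PhiC; simp only [quad8_swap12 (i:=i) (j:=j) (k:=k) (l:=l)]; ring

lemma PhiC_swap23 (i j k l : Fin 8) : PhiC i k j l = -PhiC i j k l := by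
  unfold PhiC; simp only [quad8_swap23 (i:=i) (j:=j) (k:=k) (l:=l)]; ring

lemma PhiC_swap34 (i j k l : Fin 8) : PhiC i j l k = -PhiC i j k l := by
  unfold PhiC; simp only [quad8_swap34 (i:=i) (j:=j) (k:=k) (l:=l)]; ring

-- Phi8 antisymmetry: the six transpositions
lemma Phi8_swap12 (x y z w : E8) : Phi8 y x z w = -Phi8 x y z w := by
  unfold Phi8
  rw [Finset.sum_comm]
  simp only [← Finset.sum_neg_distrib]
  refine Finset.sum_congr rfl fun i _ => ?_
  refine Finset.sum_congr rfl fun j _ => ?_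
  refine Finset.sum_congr rfl fun k _ => ?_
  refine Finset.sum_congr rfl fun l _ => ?_
  rw [PhiC_swap12]; ring

lemma Phi8_swap23 (x y z w : E8) : Phi8 x z y w = -Phi8 x y z w := by
  unfold Phi8
  simp only [← Finset.sum_neg_distrib]
  refine Finset.sum_congr rfl fun i _ => ?_
  rw [Finset.sum_comm]
  refine Finset.sum_congr rfl fun j _ => ?_
  refine Finset.sum_congr rfl fun k _ => ?_
  refine Finset.sum_congr rfl fun l _ => ?_
  rw [PhiC_swap23]; ring

lemma Phi8_swap34 (x y z w : E8) : Phi8 x y w z = -Phi8 x y z w := by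
  unfold Phi8
  simp only [← Finset.sum_neg_distrib]
  refine Finset.sum_congr rfl fun i _ => ?_
  refine Finset.sum_congr rfl fun j _ => ?_
  rw [Finset.sum_comm]
  refine Finset.sum_congr rfl fun k _ => ?_
  refine Finset.sum_congr rfl fun l _ => ?_
  rw [PhiC_swap34]; ring

lemma Phi8_swap13 (x y z w : E8) : Phi8 z y x w = -Phi8 x y z w := by
  rw [Phi8_swap12 y z x w, Phi8_swap23 y x z w, Phi8_swap12 x y z w]; ring

lemma Phi8_swap14 (x y z w : E8) : Phi8 w y z x = -Phi8 x y z w := by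
  rw [Phi8_swap13 z y w x, Phi8_swap34 z y x w, Phi8_swap13 x y z w]; ring

lemma Phi8_swap24 (x y z w : E8) : Phi8 x w z y = -Phi8 x y z w := by
  rw [Phi8_swap23 x z w y, Phi8_swap34 x z y w, Phi8_swap23 x y z w]; ring

-- P8 antisymmetries needed
lemma P8_swap12 (x y z : E8) : P8 y x z = -P8 x y z := by
  ext l
  show P8 y x z l = -(P8 x y z l)
  rw [P8_apply, P8_apply, Phi8_swap12]

lemma P8_swap13 (x y z : E8) : P8 z y x = -P8 x y z := by
  ext l
  show P8 z y x l = -(P8 x y z l)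
  rw [P8_apply, P8_apply, Phi8_swap13]

-- linearity of Phi8 in the third slot
lemma Phi8_add3 (x y z z' w : E8) : Phi8 x y (z + z') w = Phi8 x y z w + Phi8 x y z' w := by
  unfold Phi8
  simp only [PiLp.add_apply, ← Finset.sum_add_distrib]
  refine Finset.sum_congr rfl fun i _ => ?_
  refine Finset.sum_congr rfl fun j _ => ?_
  refine Finset.sum_congr rfl fun k _ => ?_
  refine Finset.sum_congr rfl fun l _ => ?_
  ring

lemma Phi8_smul3 (c : ℝ) (x y z w : E8) : Phi8 x y (c • z) w = c * Phi8 x y z w := by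
  unfold Phi8
  simp only [PiLp.smul_apply, smul_eq_mul, Finset.mul_sum]
  refine Finset.sum_congr rfl fun i _ => ?_
  refine Finset.sum_congr rfl fun j _ => ?_
  refine Finset.sum_congr rfl fun k _ => ?_
  refine Finset.sum_congr rfl fun l _ => ?_
  ring

-- the triple cross product with two fixed arguments, as a linear map
def TL (U V : E8) : E8 →ₗ[ℝ] E8 where
  toFun z := P8 U V z
  map_add' z z' := by
    ext l
    show P8 U V (z + z') l = P8 U V z l + P8 U V z' l
    rw [P8_apply, P8_apply, P8_apply, Phi8_add3]
  map_smul' c z := by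
    ext l
    show P8 U V (c • z) l = c * P8 U V z l
    rw [P8_apply, P8_apply, Phi8_smul3]

lemma TL_apply (U V x : E8) : TL U V x = P8 U V x := rfl

-- basis expansion
lemma basis_expand (x : E8) : x = ∑ t, x t • e8 t := by
  ext i
  show x i = (∑ t, x t • e8 t) i
  have : (∑ t, x t • e8 t) i = ∑ t, (x t • e8 t) i := by
    rw [WithLp.ofLp_sum]; exact Finset.sum_apply i Finset.univ _
  rw [this]
  rw [Finset.sum_eq_single i]
  · simp [e8_apply]
  · intro b _ hb
    simp [PiLp.smul_apply, e8_apply, hb, Ne.symm hb]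
  · simp

lemma map_basis (H : E8 →ₗ[ℝ] E8) (x : E8) : H x = ∑ t, x t • H (e8 t) := by
  conv_lhs => rw [basis_expand x, map_sum]
  simp only [map_smul]

lemma inner_map_expand (H : E8 →ₗ[ℝ] E8) (x : E8) (i : Fin 8) :
    ⟪H x, e8 i⟫ = ∑ t, x t * ⟪H (e8 t), e8 i⟫ := by
  conv_lhs => rw [map_basis H x]
  rw [sum_inner]
  exact Finset.sum_congr rfl fun t _ => real_inner_smul_left _ _ _

-- trace commutation
lemma trace_comm (F G : E8 →ₗ[ℝ] E8) :
    ∑ p : Fin 8, ⟪F (G (e8 p)), e8 p⟫ = ∑ p : Fin 8, ⟪G (F (e8 p)), e8 p⟫ := by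
  have key : ∀ (F G : E8 →ₗ[ℝ] E8), ∑ p : Fin 8, ⟪F (G (e8 p)), e8 p⟫
      = ∑ p : Fin 8, ∑ t : Fin 8, ⟪G (e8 p), e8 t⟫ * ⟪F (e8 t), e8 p⟫ := by
    intro F G
    refine Finset.sum_congr rfl fun p _ => ?_
    rw [inner_map_expand F (G (e8 p)) p]
    simp only [inner_e8]
  rw [key F G, key G F, Finset.sum_comm]
  refine Finset.sum_congr rfl fun p _ => Finset.sum_congr rfl fun t _ => by ring

-- sum reordering helpers
lemma sum3_rot (F : Fin 8 → Fin 8 → Fin 8 → ℝ) :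
    ∑ m, ∑ n, ∑ p, F m n p = ∑ p, ∑ m, ∑ n, F m n p := by
  have h : ∀ m, ∑ n, ∑ p, F m n p = ∑ p, ∑ n, F m n p := fun m => Finset.sum_comm
  simp only [h]
  rw [Finset.sum_comm]

lemma sum3_rotn (F : Fin 8 → Fin 8 → Fin 8 → ℝ) :
    ∑ m, ∑ n, ∑ p, F m n p = ∑ n, ∑ m, ∑ p, F m n p := Finset.sum_comm

lemma sum3_swap13 (F : Fin 8 → Fin 8 → Fin 8 → ℝ) :
    ∑ m, ∑ n, ∑ p, F m n p = ∑ m, ∑ n, ∑ p, F p n m := by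
  rw [sum3_rot]
  refine Eq.trans (Finset.sum_congr rfl fun p _ => Finset.sum_comm) rfl

-- collapse lemmas for the triple sums
lemma col1 (x y : E8) (w : Fin 8 → E8) :
    ∑ m, ∑ n, ∑ p, x m * y n * Phi8 (e8 m) (e8 n) (e8 p) (w p)
      = ∑ p, Phi8 x y (e8 p) (w p) := by
  rw [sum3_rot]
  refine Finset.sum_congr rfl fun p _ => ?_
  rw [← E1 x y (e8 p) (w p)]
  refine Finset.sum_congr rfl fun m _ => ?_
  rw [← E2 (e8 m) y (e8 p) (w p), Finset.mul_sum]
  exact Finset.sum_congr rfl fun n _ => by ring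

lemma col2 (x y : E8) (w : Fin 8 → E8) :
    ∑ m, ∑ n, ∑ p, x n * y p * Phi8 (e8 m) (e8 n) (e8 p) (w m)
      = ∑ m, Phi8 (e8 m) x y (w m) := by
  refine Finset.sum_congr rfl fun m _ => ?_
  rw [← E2 (e8 m) x y (w m)]
  refine Finset.sum_congr rfl fun n _ => ?_
  rw [← E3 (e8 m) (e8 n) y (w m), Finset.mul_sum]
  exact Finset.sum_congr rfl fun p _ => by ring

lemma col3 (x y : E8) (w : Fin 8 → E8) :
    ∑ m, ∑ n, ∑ p, x p * y m * Phi8 (e8 m) (e8 n) (e8 p) (w n)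
      = ∑ n, Phi8 y (e8 n) x (w n) := by
  rw [sum3_rotn]
  refine Finset.sum_congr rfl fun n _ => ?_
  rw [← E1 y (e8 n) x (w n)]
  refine Finset.sum_congr rfl fun m _ => ?_
  rw [← E3 (e8 m) (e8 n) x (w n), Finset.mul_sum]
  exact Finset.sum_congr rfl fun p _ => by ring

lemma col4 (x a : E8) (v : Fin 8 → E8) :
    ∑ m, ∑ n, ∑ p, x n * Phi8 (e8 m) (e8 n) (e8 p) a * (v m) p
      = ∑ m, Phi8 (e8 m) x (v m) a := by
  refine Finset.sum_congr rfl fun m _ => ?_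
  rw [← E2 (e8 m) x (v m) a]
  refine Finset.sum_congr rfl fun n _ => ?_
  rw [← E3 (e8 m) (e8 n) (v m) a, Finset.mul_sum]
  exact Finset.sum_congr rfl fun p _ => by ring

lemma col5 (x a : E8) (v : Fin 8 → E8) :
    ∑ m, ∑ n, ∑ p, x p * Phi8 (e8 m) (e8 n) (e8 p) a * (v m) n
      = ∑ m, Phi8 (e8 m) (v m) x a := by
  refine Finset.sum_congr rfl fun m _ => ?_
  rw [← E2 (e8 m) (v m) x a]
  refine Finset.sum_congr rfl fun n _ => ?_
  rw [← E3 (e8 m) (e8 n) x a, Finset.mul_sum]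
  exact Finset.sum_congr rfl fun p _ => by ring


/-- Orthogonal projection `π` of ℝ⁸ onto `Sᗮ`. -/
def projPerp (S : Submodule ℝ E8) (x : E8) : E8 := (Sᗮ.orthogonalProjection x : E8)

/-- Tangential projection `π^T = id − π`. -/
def projTan (S : Submodule ℝ E8) (x : E8) : E8 := x - projPerp S x

/-- The map `N(X; Y,Z,T)` built from `U, V` and the projection `pr = π`. -/
def Nform (U V : E8) (pr : E8 → E8) (X Y Z T : E8) : ℝ :=
  (⟪U, Y⟫ * ⟪V, Z⟫ - ⟪U, Z⟫ * ⟪V, Y⟫) * ⟪P8 U V (pr X), T⟫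
  + (⟪U, Z⟫ * ⟪V, T⟫ - ⟪U, T⟫ * ⟪V, Z⟫) * ⟪P8 U V (pr X), Y⟫
  + (⟪U, T⟫ * ⟪V, Y⟫ - ⟪U, Y⟫ * ⟪V, T⟫) * ⟪P8 U V (pr X), Z⟫

/-- The quadrilinear map `D(X,Y,Z,T) = N(X;Y,Z,T) − N(Y;X,Z,T) + N(Z;X,Y,T) − N(T;X,Y,Z)`. -/
def Dform (U V : E8) (pr : E8 → E8) (X Y Z T : E8) : ℝ :=
  Nform U V pr X Y Z T - Nform U V pr Y X Z T
  + Nform U V pr Z X Y T - Nform U V pr T X Y Z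

/-- Key algebraic computation in the proof of Theorem 2.23. -/
theorem key_computation_Cayley (S : Submodule ℝ E8) (hS : Module.finrank ℝ S = 4)
    (U V : E8) (hU : U ∈ S) (hV : V ∈ S)
    (g : Fin 4 → E8) (hg : Orthonormal ℝ g) (hgS : ∀ a, g a ∈ S)
    (hspan : Submodule.span ℝ (Set.range g) = S) :
    (1/24 : ℝ) * ∑ m : Fin 8, ∑ n : Fin 8, ∑ p : Fin 8,
        Dform U V (projPerp S)
          (projPerp S (P8 (e8 m) (e8 n) (e8 p)) - projTan S (P8 (e8 m) (e8 n) (e8 p)))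
          (e8 m) (e8 n) (e8 p)
      = (1/2 : ℝ) * ∑ a : Fin 4, ‖projPerp S (P8 U V (g a))‖ ^ 2 := by
  classical
  -- basic projection facts
  have pr_adj : ∀ x y : E8, ⟪projPerp S x, y⟫ = ⟪x, projPerp S y⟫ := by
    intro x y
    exact Submodule.inner_starProjection_left_eq_right Sᗮ x y
  have pr_idem : ∀ x : E8, projPerp S (projPerp S x) = projPerp S x := by
    intro x
    exact Submodule.starProjection_eq_self_iff.mpr (Sᗮ.orthogonalProjection x).2
  have pr_sub : ∀ x y : E8, projPerp S (x - y) = projPerp S x - projPerp S y := by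
    intro x y
    unfold projPerp
    rw [map_sub]
    rfl
  have pr_neg : ∀ x : E8, projPerp S (-x) = -projPerp S x := by
    intro x
    unfold projPerp
    rw [map_neg]
    rfl
  have prU : projPerp S U = 0 := by
    have h := Submodule.orthogonalProjection_orthogonal_apply_eq_zero (K := S) hU
    unfold projPerp
    rw [h]
    rfl
  have prV : projPerp S V = 0 := by
    have h := Submodule.orthogonalProjection_orthogonal_apply_eq_zero (K := S) hV
    unfold projPerp
    rw [h]
    rfl
  have prU' : ∀ x : E8, ⟪U, projPerp S x⟫ = 0 := by
    intro x
    rw [← pr_adj, prU, inner_zero_left]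
  have prV' : ∀ x : E8, ⟪V, projPerp S x⟫ = 0 := by
    intro x
    rw [← pr_adj, prV, inner_zero_left]
  -- skew-adjointness of the triple product
  have skew : ∀ x y : E8, ⟪P8 U V x, y⟫ = -⟪x, P8 U V y⟫ := by
    intro x y
    rw [inner_P8, real_inner_comm, inner_P8, Phi8_swap34 U V x y]
    ring
  -- the linear maps
  have prL_ex : ∃ F : E8 →ₗ[ℝ] E8, ∀ x, F x = projPerp S x := by
    refine ⟨Sᗮ.subtype.comp (Sᗮ.orthogonalProjection).toLinearMap, fun x => rfl⟩
  obtain ⟨prL, prL_apply⟩ := prL_ex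
  -- tangential projection via the orthonormal basis g
  have htau : ∀ x : E8, x - projPerp S x = ∑ a, ⟪g a, x⟫ • g a := by
    intro x
    set y := ∑ a, ⟪g a, x⟫ • g a with hy
    have hyS : y ∈ S := by
      refine Submodule.sum_mem _ fun a _ => Submodule.smul_mem _ _ (hgS a)
    have hxy : x - y ∈ Sᗮ := by
      rw [Submodule.mem_orthogonal]
      intro u hu
      rw [← hspan] at hu
      induction hu using Submodule.span_induction with
      | mem u hu =>
          obtain ⟨b, rfl⟩ := hu
          have hby : ⟪g b, y⟫ = ⟪g b, x⟫ := by
            rw [hy, inner_sum]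
            rw [Finset.sum_eq_single b]
            · rw [real_inner_smul_right, orthonormal_iff_ite.mp hg]
              simp
            · intro a _ hab
              rw [real_inner_smul_right, orthonormal_iff_ite.mp hg]
              simp [Ne.symm hab]
            · simp
          rw [inner_sub_right, hby]
          ring
      | zero => simp
      | add u v _ _ hu hv => rw [inner_add_left, hu, hv]; ring
      | smul c u _ hu => rw [real_inner_smul_left, hu]; ring
    have hprx : projPerp S x = x - y := by
      have h1 : projPerp S (x - y) = x - y :=
        Submodule.starProjection_eq_self_iff.mpr hxy
      have h2 : projPerp S y = 0 := by
        have h := Submodule.orthogonalProjection_orthogonal_apply_eq_zero (K := S) hyS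
        unfold projPerp
        rw [h]
        rfl
      have h3 : x = (x - y) + y := by abel
      calc projPerp S x = projPerp S ((x - y) + y) := by rw [← h3]
        _ = projPerp S ((x - y)) - projPerp S (-y) := by
              rw [← pr_sub]
              norm_num
        _ = (x - y) - (-(projPerp S y)) := by rw [h1, pr_neg]
        _ = x - y := by rw [h2]; simp
    rw [hprx]
    abel
  -- conversions between TL/prL applications and plain terms
  have hTLs : ∀ x : E8, TL U V x = P8 U V x := fun x => rfl
  have step1 : ∀ a, ‖projPerp S (P8 U V (g a))‖ ^ 2
      = ⟪P8 U V (g a), projPerp S (P8 U V (g a))⟫ := by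
    intro a
    rw [← real_inner_self_eq_norm_sq, pr_adj, pr_idem]
  have expand : ∀ a, projPerp S (P8 U V (g a))
      = ∑ p, (g a) p • projPerp S (P8 U V (e8 p)) := by
    intro a
    have h := map_basis (prL.comp (TL U V)) (g a)
    simpa only [LinearMap.comp_apply, prL_apply, hTLs] using h
  have hRHS : ∑ a : Fin 4, ‖projPerp S (P8 U V (g a))‖ ^ 2
      = (∑ p : Fin 8, ⟪P8 U V (e8 p), projPerp S (P8 U V (e8 p))⟫)
        + ∑ p : Fin 8, ⟪P8 U V (projPerp S (P8 U V (projPerp S (e8 p)))), e8 p⟫ := by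
    calc ∑ a : Fin 4, ‖projPerp S (P8 U V (g a))‖ ^ 2
        = ∑ a : Fin 4, ∑ p : Fin 8,
            (g a) p * ⟪P8 U V (g a), projPerp S (P8 U V (e8 p))⟫ := by
          refine Finset.sum_congr rfl fun a _ => ?_
          rw [step1 a, expand a, inner_sum]
          exact Finset.sum_congr rfl fun p _ => real_inner_smul_right _ _ _
      _ = ∑ p : Fin 8, ∑ a : Fin 4,
            (g a) p * ⟪P8 U V (g a), projPerp S (P8 U V (e8 p))⟫ := Finset.sum_comm
      _ = ∑ p : Fin 8, ⟪P8 U V (e8 p - projPerp S (e8 p)), projPerp S (P8 U V (e8 p))⟫ := by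
          refine Finset.sum_congr rfl fun p _ => ?_
          have h1 : ∀ a, (g a) p * ⟪P8 U V (g a), projPerp S (P8 U V (e8 p))⟫
              = ⟪(g a) p • P8 U V (g a), projPerp S (P8 U V (e8 p))⟫ := by
            intro a
            rw [real_inner_smul_left]
          simp only [h1]
          rw [← sum_inner]
          congr 1
          have h2 : (∑ a, ((g a) p) • P8 U V (g a) : E8)
              = P8 U V (∑ a, ((g a) p) • g a) := by
            calc (∑ a, ((g a) p) • P8 U V (g a) : E8)
                = ∑ a, P8 U V (((g a) p) • g a) := by
                  refine Finset.sum_congr rfl fun a _ => ?_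
                  have h := (TL U V).map_smul ((g a) p) (g a)
                  simp only [hTLs] at h
                  rw [h]
              _ = P8 U V (∑ a, ((g a) p) • g a) := by
                  have h := map_sum (TL U V) (fun a => ((g a) p) • g a) Finset.univ
                  simp only [hTLs] at h
                  rw [← h]
          rw [h2]
          congr 1
          have h3 : (∑ a, ((g a) p) • g a : E8) = ∑ a, ⟪g a, e8 p⟫ • g a := by
            refine Finset.sum_congr rfl fun a _ => ?_
            rw [inner_e8]
          rw [h3, ← htau (e8 p)]
      _ = (∑ p : Fin 8, ⟪P8 U V (e8 p), projPerp S (P8 U V (e8 p))⟫)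
          + ∑ p : Fin 8, ⟪P8 U V (projPerp S (P8 U V (projPerp S (e8 p)))), e8 p⟫ := by
          rw [← Finset.sum_add_distrib]
          refine Finset.sum_congr rfl fun p _ => ?_
          have h4 : P8 U V (e8 p - projPerp S (e8 p))
              = P8 U V (e8 p) - P8 U V (projPerp S (e8 p)) := by
            have h := (TL U V).map_sub (e8 p) (projPerp S (e8 p))
            simpa only [hTLs] using h
          rw [h4, inner_sub_left]
          have h5 : ⟪P8 U V (projPerp S (e8 p)), projPerp S (P8 U V (e8 p))⟫
              = -⟪P8 U V (projPerp S (P8 U V (projPerp S (e8 p)))), e8 p⟫ := by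
            rw [← pr_adj]
            rw [show ⟪projPerp S (P8 U V (projPerp S (e8 p))), P8 U V (e8 p)⟫
                = -⟪P8 U V (projPerp S (P8 U V (projPerp S (e8 p)))), e8 p⟫ from by
              rw [skew]; ring]
          rw [h5]
          ring
  -- alpha = - gamma by cyclicity of the trace
  have halphagamma : (∑ p : Fin 8, ⟪P8 U V (e8 p), projPerp S (P8 U V (e8 p))⟫)
      = -∑ p : Fin 8, ⟪P8 U V (P8 U V (projPerp S (e8 p))), e8 p⟫ := by
    have h1 : ∀ p : Fin 8, ⟪P8 U V (e8 p), projPerp S (P8 U V (e8 p))⟫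
        = -⟪P8 U V (projPerp S (P8 U V (e8 p))), e8 p⟫ := by
      intro p
      rw [← pr_adj]
      rw [show ⟪projPerp S (P8 U V (e8 p)), P8 U V (e8 p)⟫
          = -⟪P8 U V (projPerp S (P8 U V (e8 p))), e8 p⟫ from by rw [skew]; ring]
    have h2 := trace_comm (TL U V) (prL ∘ₗ TL U V)
    have h3 := trace_comm (TL U V ∘ₗ TL U V) prL
    simp only [LinearMap.comp_apply, hTLs, prL_apply] at h2 h3
    simp only [h1, Finset.sum_neg_distrib]
    rw [h2, ← h3]
  -- permutation helpers with U V fixed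
  have hp1 : ∀ (a w : E8), Phi8 a U V w = Phi8 U V a w := by
    intro a w
    rw [Phi8_swap12 U a V w, Phi8_swap23 U V a w]
    ring
  have hp3 : ∀ (a w : E8), Phi8 V a U w = Phi8 U V a w := by
    intro a w
    rw [Phi8_swap13 U a V w, Phi8_swap23 U V a w]
    ring
  have hp4 : ∀ (a w : E8), Phi8 U a V w = -Phi8 U V a w := Phi8_swap23 U V
  have hp5 : ∀ (a w : E8), Phi8 a V w U = -Phi8 U V w a := fun a w => Phi8_swap14 U V w a
  have hp6 : ∀ (a w : E8), Phi8 a U w V = Phi8 U V w a := by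
    intro a w
    rw [Phi8_swap12 U a w V, Phi8_swap24 U V w a]
    ring
  have hp7 : ∀ (a w : E8), Phi8 a w U V = -Phi8 U V w a := by
    intro a w
    rw [Phi8_swap13 U w a V, Phi8_swap24 U V a w, Phi8_swap34 U V w a]
    ring
  have hp8 : ∀ (a w : E8), Phi8 a w V U = Phi8 U V w a := by
    intro a w
    rw [Phi8_swap34 a w U V, hp7 a w]
    ring
  have hp9 : ∀ (a w : E8), Phi8 a V U w = -Phi8 U V a w := by
    intro a w
    rw [Phi8_swap23 a U V w, hp1 a w]
  -- the key rewriting of the Q-factor in group 1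
  have hQXX : ∀ m n p (y : E8),
      ⟪P8 U V (projPerp S (projPerp S (P8 (e8 m) (e8 n) (e8 p))
          - projTan S (P8 (e8 m) (e8 n) (e8 p)))), y⟫
        = -Phi8 (e8 m) (e8 n) (e8 p) (projPerp S (P8 U V y)) := by
    intro m n p y
    have h1 : projPerp S (projPerp S (P8 (e8 m) (e8 n) (e8 p))
        - projTan S (P8 (e8 m) (e8 n) (e8 p)))
        = projPerp S (P8 (e8 m) (e8 n) (e8 p)) := by
      unfold projTan
      rw [pr_sub, pr_sub, pr_idem]
      abel
    rw [h1, inner_P8, Phi8_swap34 U V y (projPerp S (P8 (e8 m) (e8 n) (e8 p)))]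
    have h3 : Phi8 U V y (projPerp S (P8 (e8 m) (e8 n) (e8 p)))
        = Phi8 (e8 m) (e8 n) (e8 p) (projPerp S (P8 U V y)) := by
      rw [← inner_P8 U V y, real_inner_comm, pr_adj, ← inner_P8]
    rw [h3]
  -- Group 1
  have hG1 : (∑ m : Fin 8, ∑ n : Fin 8, ∑ p : Fin 8,
      Nform U V (projPerp S)
        (projPerp S (P8 (e8 m) (e8 n) (e8 p)) - projTan S (P8 (e8 m) (e8 n) (e8 p)))
        (e8 m) (e8 n) (e8 p))
      = -6 * ∑ p : Fin 8, ⟪P8 U V (e8 p), projPerp S (P8 U V (e8 p))⟫ := by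
    have hpt : ∀ m n p : Fin 8, Nform U V (projPerp S)
        (projPerp S (P8 (e8 m) (e8 n) (e8 p)) - projTan S (P8 (e8 m) (e8 n) (e8 p)))
        (e8 m) (e8 n) (e8 p)
        = (V m * U n * Phi8 (e8 m) (e8 n) (e8 p) (projPerp S (P8 U V (e8 p)))
            - U m * V n * Phi8 (e8 m) (e8 n) (e8 p) (projPerp S (P8 U V (e8 p))))
        + (V n * U p * Phi8 (e8 m) (e8 n) (e8 p) (projPerp S (P8 U V (e8 m)))
            - U n * V p * Phi8 (e8 m) (e8 n) (e8 p) (projPerp S (P8 U V (e8 m))))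
        + (V p * U m * Phi8 (e8 m) (e8 n) (e8 p) (projPerp S (P8 U V (e8 n)))
            - U p * V m * Phi8 (e8 m) (e8 n) (e8 p) (projPerp S (P8 U V (e8 n)))) := by
      intro m n p
      simp only [Nform, hQXX, inner_e8]
      ring
    calc (∑ m : Fin 8, ∑ n : Fin 8, ∑ p : Fin 8, Nform U V (projPerp S)
        (projPerp S (P8 (e8 m) (e8 n) (e8 p)) - projTan S (P8 (e8 m) (e8 n) (e8 p)))
        (e8 m) (e8 n) (e8 p))
        = ∑ m : Fin 8, ∑ n : Fin 8, ∑ p : Fin 8,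
          ((V m * U n * Phi8 (e8 m) (e8 n) (e8 p) (projPerp S (P8 U V (e8 p)))
            - U m * V n * Phi8 (e8 m) (e8 n) (e8 p) (projPerp S (P8 U V (e8 p))))
          + (V n * U p * Phi8 (e8 m) (e8 n) (e8 p) (projPerp S (P8 U V (e8 m)))
            - U n * V p * Phi8 (e8 m) (e8 n) (e8 p) (projPerp S (P8 U V (e8 m))))
          + (V p * U m * Phi8 (e8 m) (e8 n) (e8 p) (projPerp S (P8 U V (e8 n)))
            - U p * V m * Phi8 (e8 m) (e8 n) (e8 p) (projPerp S (P8 U V (e8 n))))) := by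
          exact Finset.sum_congr rfl fun m _ => Finset.sum_congr rfl fun n _ =>
            Finset.sum_congr rfl fun p _ => hpt m n p
      _ = -6 * ∑ p : Fin 8, ⟪P8 U V (e8 p), projPerp S (P8 U V (e8 p))⟫ := by
          simp only [Finset.sum_add_distrib, Finset.sum_sub_distrib]
          rw [col1 V U (fun i => projPerp S (P8 U V (e8 i))),
              col1 U V (fun i => projPerp S (P8 U V (e8 i))),
              col2 V U (fun i => projPerp S (P8 U V (e8 i))),
              col2 U V (fun i => projPerp S (P8 U V (e8 i))),
              col3 V U (fun i => projPerp S (P8 U V (e8 i))),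
              col3 U V (fun i => projPerp S (P8 U V (e8 i)))]
          simp only [Phi8_swap12 U V, hp1, hp3, hp4, hp9]
          simp only [inner_P8]
          simp only [Finset.sum_neg_distrib]
          ring
  -- pointwise facts for group 2
  have hUXX : ∀ m n p : Fin 8, ⟪U, projPerp S (P8 (e8 m) (e8 n) (e8 p))
        - projTan S (P8 (e8 m) (e8 n) (e8 p))⟫
      = -Phi8 (e8 m) (e8 n) (e8 p) U := by
    intro m n p
    unfold projTan
    rw [inner_sub_right, inner_sub_right, prU']
    rw [real_inner_comm (P8 (e8 m) (e8 n) (e8 p)) U, inner_P8]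
    ring
  have hVXX : ∀ m n p : Fin 8, ⟪V, projPerp S (P8 (e8 m) (e8 n) (e8 p))
        - projTan S (P8 (e8 m) (e8 n) (e8 p))⟫
      = -Phi8 (e8 m) (e8 n) (e8 p) V := by
    intro m n p
    unfold projTan
    rw [inner_sub_right, inner_sub_right, prV']
    rw [real_inner_comm (P8 (e8 m) (e8 n) (e8 p)) V, inner_P8]
    ring
  have hQmXX : ∀ m n p : Fin 8, ⟪P8 U V (projPerp S (e8 m)),
        projPerp S (P8 (e8 m) (e8 n) (e8 p)) - projTan S (P8 (e8 m) (e8 n) (e8 p))⟫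
      = 2 * Phi8 (e8 m) (e8 n) (e8 p) (projPerp S (P8 U V (projPerp S (e8 m))))
        - Phi8 (e8 m) (e8 n) (e8 p) (P8 U V (projPerp S (e8 m))) := by
    intro m n p
    unfold projTan
    rw [inner_sub_right, inner_sub_right]
    rw [show ⟪P8 U V (projPerp S (e8 m)), projPerp S (P8 (e8 m) (e8 n) (e8 p))⟫
        = Phi8 (e8 m) (e8 n) (e8 p) (projPerp S (P8 U V (projPerp S (e8 m)))) from by
      rw [← pr_adj, real_inner_comm, inner_P8]]
    rw [show ⟪P8 U V (projPerp S (e8 m)), P8 (e8 m) (e8 n) (e8 p)⟫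
        = Phi8 (e8 m) (e8 n) (e8 p) (P8 U V (projPerp S (e8 m))) from by
      rw [real_inner_comm, inner_P8]]
    ring
  have skew' : ∀ x y : E8, ⟪x, P8 U V y⟫ = -⟪P8 U V x, y⟫ := by
    intro x y
    rw [skew]
    ring
  have hgammapt : ∀ m : Fin 8, Phi8 U V (e8 m) (P8 U V (projPerp S (e8 m)))
      = -Phi8 U V (P8 U V (projPerp S (e8 m))) (e8 m) := by
    intro m
    rw [← inner_P8, ← inner_P8, real_inner_comm,
      skew' (P8 U V (projPerp S (e8 m))) (e8 m)]
  have hdeltapt : ∀ m : Fin 8, Phi8 U V (e8 m) (projPerp S (P8 U V (projPerp S (e8 m))))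
      = -Phi8 U V (projPerp S (P8 U V (projPerp S (e8 m)))) (e8 m) := by
    intro m
    rw [← inner_P8, ← inner_P8, real_inner_comm,
      skew' (projPerp S (P8 U V (projPerp S (e8 m)))) (e8 m)]
  -- Group 2
  have hG2 : (∑ m : Fin 8, ∑ n : Fin 8, ∑ p : Fin 8,
      Nform U V (projPerp S) (e8 m)
        (projPerp S (P8 (e8 m) (e8 n) (e8 p)) - projTan S (P8 (e8 m) (e8 n) (e8 p)))
        (e8 n) (e8 p))
      = 6 * (∑ p : Fin 8, ⟪P8 U V (P8 U V (projPerp S (e8 p))), e8 p⟫)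
        - 4 * ∑ p : Fin 8, ⟪P8 U V (projPerp S (P8 U V (projPerp S (e8 p)))), e8 p⟫ := by
    have hpt : ∀ m n p : Fin 8, Nform U V (projPerp S) (e8 m)
        (projPerp S (P8 (e8 m) (e8 n) (e8 p)) - projTan S (P8 (e8 m) (e8 n) (e8 p)))
        (e8 n) (e8 p)
        = (U n * Phi8 (e8 m) (e8 n) (e8 p) V * P8 U V (projPerp S (e8 m)) p
            - V n * Phi8 (e8 m) (e8 n) (e8 p) U * P8 U V (projPerp S (e8 m)) p)
        + (2 * (U n * V p * Phi8 (e8 m) (e8 n) (e8 p) (projPerp S (P8 U V (projPerp S (e8 m)))))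
            - U n * V p * Phi8 (e8 m) (e8 n) (e8 p) (P8 U V (projPerp S (e8 m)))
            - 2 * (V n * U p * Phi8 (e8 m) (e8 n) (e8 p) (projPerp S (P8 U V (projPerp S (e8 m)))))
            + V n * U p * Phi8 (e8 m) (e8 n) (e8 p) (P8 U V (projPerp S (e8 m))))
        + (V p * Phi8 (e8 m) (e8 n) (e8 p) U * P8 U V (projPerp S (e8 m)) n
            - U p * Phi8 (e8 m) (e8 n) (e8 p) V * P8 U V (projPerp S (e8 m)) n) := by
      intro m n p
      simp only [Nform, hUXX, hVXX, hQmXX, inner_e8]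
      ring
    calc (∑ m : Fin 8, ∑ n : Fin 8, ∑ p : Fin 8,
        Nform U V (projPerp S) (e8 m)
          (projPerp S (P8 (e8 m) (e8 n) (e8 p)) - projTan S (P8 (e8 m) (e8 n) (e8 p)))
          (e8 n) (e8 p))
        = ∑ m : Fin 8, ∑ n : Fin 8, ∑ p : Fin 8,
          ((U n * Phi8 (e8 m) (e8 n) (e8 p) V * P8 U V (projPerp S (e8 m)) p
            - V n * Phi8 (e8 m) (e8 n) (e8 p) U * P8 U V (projPerp S (e8 m)) p)
          + (2 * (U n * V p * Phi8 (e8 m) (e8 n) (e8 p) (projPerp S (P8 U V (projPerp S (e8 m)))))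
            - U n * V p * Phi8 (e8 m) (e8 n) (e8 p) (P8 U V (projPerp S (e8 m)))
            - 2 * (V n * U p * Phi8 (e8 m) (e8 n) (e8 p) (projPerp S (P8 U V (projPerp S (e8 m)))))
            + V n * U p * Phi8 (e8 m) (e8 n) (e8 p) (P8 U V (projPerp S (e8 m))))
          + (V p * Phi8 (e8 m) (e8 n) (e8 p) U * P8 U V (projPerp S (e8 m)) n
            - U p * Phi8 (e8 m) (e8 n) (e8 p) V * P8 U V (projPerp S (e8 m)) n)) := by
          exact Finset.sum_congr rfl fun m _ => Finset.sum_congr rfl fun n _ =>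
            Finset.sum_congr rfl fun p _ => hpt m n p
      _ = 6 * (∑ p : Fin 8, ⟪P8 U V (P8 U V (projPerp S (e8 p))), e8 p⟫)
          - 4 * ∑ p : Fin 8, ⟪P8 U V (projPerp S (P8 U V (projPerp S (e8 p)))), e8 p⟫ := by
          simp only [Finset.sum_add_distrib, Finset.sum_sub_distrib, ← Finset.mul_sum]
          rw [col4 U V (fun i => P8 U V (projPerp S (e8 i))),
              col4 V U (fun i => P8 U V (projPerp S (e8 i))),
              col5 V U (fun i => P8 U V (projPerp S (e8 i))),
              col5 U V (fun i => P8 U V (projPerp S (e8 i))),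
              col2 U V (fun i => projPerp S (P8 U V (projPerp S (e8 i)))),
              col2 V U (fun i => projPerp S (P8 U V (projPerp S (e8 i)))),
              col2 U V (fun i => P8 U V (projPerp S (e8 i))),
              col2 V U (fun i => P8 U V (projPerp S (e8 i)))]
          simp only [hp1, hp5, hp6, hp7, hp8, hp9]
          simp only [hgammapt, hdeltapt]
          simp only [inner_P8]
          simp only [Finset.sum_neg_distrib]
          ring
  -- antisymmetry of the Dform first argument
  have tan_neg : ∀ x : E8, projTan S (-x) = -projTan S x := by
    intro x
    unfold projTan
    rw [pr_neg]
    abel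
  have hXX12 : ∀ m n p : Fin 8,
      projPerp S (P8 (e8 n) (e8 m) (e8 p)) - projTan S (P8 (e8 n) (e8 m) (e8 p))
      = -(projPerp S (P8 (e8 m) (e8 n) (e8 p)) - projTan S (P8 (e8 m) (e8 n) (e8 p))) := by
    intro m n p
    rw [P8_swap12 (e8 m) (e8 n) (e8 p), pr_neg, tan_neg]
    abel
  have hXX13 : ∀ m n p : Fin 8,
      projPerp S (P8 (e8 p) (e8 n) (e8 m)) - projTan S (P8 (e8 p) (e8 n) (e8 m))
      = -(projPerp S (P8 (e8 m) (e8 n) (e8 p)) - projTan S (P8 (e8 m) (e8 n) (e8 p))) := by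
    intro m n p
    rw [P8_swap13 (e8 m) (e8 n) (e8 p), pr_neg, tan_neg]
    abel
  have hNnegY : ∀ W Y Z T' : E8, Nform U V (projPerp S) W (-Y) Z T'
      = -Nform U V (projPerp S) W Y Z T' := by
    intro W Y Z T'
    simp only [Nform, inner_neg_right]
    ring
  have hNswapZT : ∀ W Y Z T' : E8, Nform U V (projPerp S) W Y T' Z
      = -Nform U V (projPerp S) W Y Z T' := by
    intro W Y Z T'
    simp only [Nform]
    ring
  -- Group 3
  have hG3 : (∑ m : Fin 8, ∑ n : Fin 8, ∑ p : Fin 8,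
      Nform U V (projPerp S) (e8 n)
        (projPerp S (P8 (e8 m) (e8 n) (e8 p)) - projTan S (P8 (e8 m) (e8 n) (e8 p)))
        (e8 m) (e8 p))
      = -(6 * (∑ p : Fin 8, ⟪P8 U V (P8 U V (projPerp S (e8 p))), e8 p⟫)
        - 4 * ∑ p : Fin 8, ⟪P8 U V (projPerp S (P8 U V (projPerp S (e8 p)))), e8 p⟫) := by
    rw [sum3_rotn (fun m n p => Nform U V (projPerp S) (e8 n)
      (projPerp S (P8 (e8 m) (e8 n) (e8 p)) - projTan S (P8 (e8 m) (e8 n) (e8 p)))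
      (e8 m) (e8 p))]
    rw [← hG2]
    rw [show (∑ n : Fin 8, ∑ m : Fin 8, ∑ p : Fin 8, Nform U V (projPerp S) (e8 n)
        (projPerp S (P8 (e8 m) (e8 n) (e8 p)) - projTan S (P8 (e8 m) (e8 n) (e8 p)))
        (e8 m) (e8 p))
      = ∑ m : Fin 8, ∑ n : Fin 8, ∑ p : Fin 8, -(Nform U V (projPerp S) (e8 m)
        (projPerp S (P8 (e8 m) (e8 n) (e8 p)) - projTan S (P8 (e8 m) (e8 n) (e8 p)))
        (e8 n) (e8 p)) from ?_]
    · simp only [Finset.sum_neg_distrib]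
    · refine Finset.sum_congr rfl fun m _ => Finset.sum_congr rfl fun n _ =>
        Finset.sum_congr rfl fun p _ => ?_
      rw [hXX12 m n p, hNnegY]
  -- Group 4
  have hG4 : (∑ m : Fin 8, ∑ n : Fin 8, ∑ p : Fin 8,
      Nform U V (projPerp S) (e8 p)
        (projPerp S (P8 (e8 m) (e8 n) (e8 p)) - projTan S (P8 (e8 m) (e8 n) (e8 p)))
        (e8 m) (e8 n))
      = 6 * (∑ p : Fin 8, ⟪P8 U V (P8 U V (projPerp S (e8 p))), e8 p⟫)
        - 4 * ∑ p : Fin 8, ⟪P8 U V (projPerp S (P8 U V (projPerp S (e8 p)))), e8 p⟫ := by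
    rw [sum3_swap13 (fun m n p => Nform U V (projPerp S) (e8 p)
      (projPerp S (P8 (e8 m) (e8 n) (e8 p)) - projTan S (P8 (e8 m) (e8 n) (e8 p)))
      (e8 m) (e8 n))]
    rw [← hG2]
    refine Finset.sum_congr rfl fun m _ => Finset.sum_congr rfl fun n _ =>
      Finset.sum_congr rfl fun p _ => ?_
    rw [hXX13 m n p, hNnegY, hNswapZT]
    ring
  -- assembling
  have hsplit : (∑ m : Fin 8, ∑ n : Fin 8, ∑ p : Fin 8,
      Dform U V (projPerp S)
        (projPerp S (P8 (e8 m) (e8 n) (e8 p)) - projTan S (P8 (e8 m) (e8 n) (e8 p)))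
        (e8 m) (e8 n) (e8 p))
      = (∑ m : Fin 8, ∑ n : Fin 8, ∑ p : Fin 8, Nform U V (projPerp S)
          (projPerp S (P8 (e8 m) (e8 n) (e8 p)) - projTan S (P8 (e8 m) (e8 n) (e8 p)))
          (e8 m) (e8 n) (e8 p))
      - (∑ m : Fin 8, ∑ n : Fin 8, ∑ p : Fin 8, Nform U V (projPerp S) (e8 m)
          (projPerp S (P8 (e8 m) (e8 n) (e8 p)) - projTan S (P8 (e8 m) (e8 n) (e8 p)))
          (e8 n) (e8 p))
      + (∑ m : Fin 8, ∑ n : Fin 8, ∑ p : Fin 8, Nform U V (projPerp S) (e8 n)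
          (projPerp S (P8 (e8 m) (e8 n) (e8 p)) - projTan S (P8 (e8 m) (e8 n) (e8 p)))
          (e8 m) (e8 p))
      - (∑ m : Fin 8, ∑ n : Fin 8, ∑ p : Fin 8, Nform U V (projPerp S) (e8 p)
          (projPerp S (P8 (e8 m) (e8 n) (e8 p)) - projTan S (P8 (e8 m) (e8 n) (e8 p)))
          (e8 m) (e8 n)) := by
    simp only [Dform, Finset.sum_add_distrib, Finset.sum_sub_distrib]
  rw [hsplit, hG1, hG2, hG3, hG4, hRHS]
  linear_combination (-3/4 : ℝ) * halphagamma
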